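/- (Leading logarithmic term of I_2 at the figure-eight.) As h → 0⁺ one has (I_2(h) − 16/15 − 4h) / (h²·ln h) → 1/2. -/

import Mathlib

open Real Set Filter intervalIntegral

/-- Right endpoint of the exterior oval: `x_max(h) = √(1 + √(1+4h))`. -/
noncomputable def xmax (h : ℝ) : ℝ := Real.sqrt (1 + Real.sqrt (1 + 4*h))

/-- Complete elliptic integral `I_i(h) = ∫_{-x_max}^{x_max} x^i √(2h + x² - x⁴/2) dx`. -/
noncomputable def ellI (i : ℕ) (h : ℝ) : ℝ :=
  ∫ x in (-xmax h)..(xmax h), x^i * Real.sqrt (2*h + x^2 - x^4/2)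

/-- Complete elliptic integral `I'_i(h) = ∫_{-x_max}^{x_max} x^i (2h + x² - x⁴/2)^{-1/2} dx`. -/
noncomputable def ellI' (i : ℕ) (h : ℝ) : ℝ :=
  ∫ x in (-xmax h)..(xmax h), x^i / Real.sqrt (2*h + x^2 - x^4/2)

/-! ### Auxiliary definitions -/

noncomputable def uu (h : ℝ) : ℝ := Real.sqrt (1 + 4*h)
noncomputable def AA (h : ℝ) : ℝ := 1 + uu h
noncomputable def BB (h : ℝ) : ℝ := uu h - 1
noncomputable def DD (h t : ℝ) : ℝ := Real.sqrt (t*(t + BB h)) + t + BB h / 2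
noncomputable def RR (h : ℝ) : ℝ := ∫ t in (0:ℝ)..(AA h), Real.sqrt (AA h - t) / DD h t

/-! ### Elementary facts -/

lemma uu_sq {h : ℝ} (hh : 0 < h) : uu h ^ 2 = 1 + 4*h := by
  rw [uu, sq_sqrt]; linarith

lemma uu_nonneg (h : ℝ) : 0 ≤ uu h := Real.sqrt_nonneg _

lemma one_lt_uu {h : ℝ} (hh : 0 < h) : 1 < uu h := by
  have h1 := uu_sq hh
  have h2 := uu_nonneg h
  nlinarith

lemma BB_pos {h : ℝ} (hh : 0 < h) : 0 < BB h := by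
  have := one_lt_uu hh; rw [BB]; linarith

lemma AA_pos {h : ℝ} (hh : 0 < h) : 2 < AA h := by
  have := one_lt_uu hh; rw [AA]; linarith

lemma xmax_sq {h : ℝ} (hh : 0 < h) : (xmax h)^2 = AA h := by
  rw [xmax, sq_sqrt]
  · rfl
  · have : (0:ℝ) ≤ Real.sqrt (1+4*h) := Real.sqrt_nonneg _
    linarith

lemma xmax_eq (h : ℝ) : xmax h = Real.sqrt (AA h) := rfl

lemma xmax_nonneg (h : ℝ) : 0 ≤ xmax h := Real.sqrt_nonneg _

lemma AsubB (h : ℝ) : AA h - BB h = 2 := by rw [AA, BB]; ring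

lemma AB {h : ℝ} (hh : 0 < h) : AA h * BB h = 4*h := by
  have := uu_sq hh
  rw [AA, BB]; nlinarith

lemma DD_pos {h t : ℝ} (hh : 0 < h) (ht : 0 ≤ t) : 0 < DD h t := by
  have h1 : (0:ℝ) ≤ Real.sqrt (t*(t+BB h)) := Real.sqrt_nonneg _
  have h2 := BB_pos hh
  rw [DD]; linarith

lemma DD_cont (h : ℝ) : Continuous (fun t => DD h t) := by
  unfold DD; fun_prop

lemma quot_intble {h : ℝ} (hh : 0 < h) :
    IntervalIntegrable (fun t => Real.sqrt (AA h - t) / DD h t) MeasureTheory.volume 0 (AA h) := by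
  apply ContinuousOn.intervalIntegrable
  rw [uIcc_of_le (by linarith [AA_pos hh])]
  apply ContinuousOn.div
  · fun_prop
  · exact (DD_cont h).continuousOn
  · intro t ht
    exact (DD_pos hh ht.1).ne'

/-! ### Step 1 : substitution t = x² -/

lemma key1 {h : ℝ} (hh : 0 < h) :
    ellI 2 h = (Real.sqrt 2)⁻¹ * ∫ t in (0:ℝ)..(AA h), Real.sqrt t * Real.sqrt (4*h + 2*t - t^2) := by
  have hw := xmax_nonneg h
  set w := xmax h with hwdef
  have hsplit : ellI 2 h = (∫ x in (-w)..(0:ℝ), x^2 * Real.sqrt (2*h + x^2 - x^4/2))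
      + ∫ x in (0:ℝ)..w, x^2 * Real.sqrt (2*h + x^2 - x^4/2) := by
    rw [ellI, integral_add_adjacent_intervals] <;>
    · apply Continuous.intervalIntegrable; continuity
  have heven : (∫ x in (-w)..(0:ℝ), x^2 * Real.sqrt (2*h + x^2 - x^4/2))
      = ∫ x in (0:ℝ)..w, x^2 * Real.sqrt (2*h + x^2 - x^4/2) := by
    have hcn := intervalIntegral.integral_comp_neg (a := (0:ℝ)) (b := w)
      (fun x => x^2 * Real.sqrt (2*h + x^2 - x^4/2))
    rw [neg_zero] at hcn
    rw [← hcn]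
    apply intervalIntegral.integral_congr
    intro x _
    ring_nf
  set g : ℝ → ℝ := fun t => Real.sqrt t * Real.sqrt (4*h + 2*t - t^2) / (2 * Real.sqrt 2) with hg
  have hsub : (∫ x in (0:ℝ)..w, (2*x) • g (x^2)) = ∫ t in (0:ℝ)..(AA h), g t := by
    have := intervalIntegral.integral_comp_smul_deriv (a := 0) (b := w)
      (f := fun x => x^2) (f' := fun x => 2*x) (g := g)
      (fun x _ => by simpa using (hasDerivAt_pow 2 x)) (by fun_prop) (by rw [hg]; fun_prop)
    simp only [Function.comp] at this
    rw [show ((0:ℝ)^2) = 0 by norm_num, xmax_sq hh] at this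
    exact this
  have hcongr : (∫ x in (0:ℝ)..w, x^2 * Real.sqrt (2*h + x^2 - x^4/2))
      = ∫ x in (0:ℝ)..w, (2*x) • g (x^2) := by
    apply intervalIntegral.integral_congr
    intro x hx
    rw [uIcc_of_le hw] at hx
    have hx0 : 0 ≤ x := hx.1
    have h1 : Real.sqrt (x^2) = x := Real.sqrt_sq hx0
    have h2 : Real.sqrt (4*h + 2*x^2 - (x^2)^2) = Real.sqrt 2 * Real.sqrt (2*h + x^2 - x^4/2) := by
      rw [← Real.sqrt_mul (by norm_num : (0:ℝ) ≤ 2)]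
      ring_nf
    have hs2 : Real.sqrt 2 ≠ 0 := by positivity
    rw [hg]; simp only [smul_eq_mul]
    rw [h1, h2]
    field_simp
  have hgint : ∫ t in (0:ℝ)..AA h, g t
      = (∫ t in (0:ℝ)..AA h, Real.sqrt t * Real.sqrt (4*h+2*t-t^2)) / (2*Real.sqrt 2) := by
    rw [hg, intervalIntegral.integral_div]
  rw [hsplit, heven, hcongr, hsub, hgint]
  have hs2 : Real.sqrt 2 ≠ 0 := by positivity
  field_simp
  ring

/-! ### Step 2 : splitting the integrand -/

lemma integrand_id {h t : ℝ} (hh : 0 < h) (ht : t ∈ Icc 0 (AA h)) :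
    Real.sqrt t * Real.sqrt (4*h + 2*t - t^2)
      = (t + BB h/2) * Real.sqrt (AA h - t)
        - (BB h^2/4) * (Real.sqrt (AA h - t) / DD h t) := by
  obtain ⟨ht0, htA⟩ := ht
  have hB := BB_pos hh
  have htB : 0 ≤ t * (t + BB h) := by positivity
  have hALG : 4*h + 2*t - t^2 = (AA h - t) * (t + BB h) := by
    have h1 := AB hh
    have h2 := AsubB h
    linear_combination -h1 - t*h2
  have hsq : Real.sqrt (4*h + 2*t - t^2)
      = Real.sqrt (AA h - t) * Real.sqrt (t + BB h) := by
    rw [hALG, Real.sqrt_mul (by linarith)]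
  have hmul : Real.sqrt t * Real.sqrt (t + BB h) = Real.sqrt (t*(t + BB h)) :=
    (Real.sqrt_mul ht0 _).symm
  set s := Real.sqrt (t*(t + BB h)) with hsdef
  have hs2 : s^2 = t*(t + BB h) := Real.sq_sqrt htB
  have hD := DD_pos hh ht0
  have hDval : DD h t = s + t + BB h / 2 := rfl
  have hkey : s = (t + BB h/2) - BB h^2/4 / DD h t := by
    rw [hDval] at hD ⊢
    have h' : BB h^2/4 / (s + t + BB h/2) = (t + BB h/2) - s := by
      rw [div_eq_iff hD.ne']; linear_combination hs2
    linarith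
  calc Real.sqrt t * Real.sqrt (4*h + 2*t - t^2)
      = s * Real.sqrt (AA h - t) := by rw [hsq, ← hmul]; ring
    _ = ((t + BB h/2) - BB h^2/4 / DD h t) * Real.sqrt (AA h - t) := by rw [hkey]
    _ = _ := by ring

lemma key2 {h : ℝ} (hh : 0 < h) :
    (∫ t in (0:ℝ)..(AA h), Real.sqrt t * Real.sqrt (4*h + 2*t - t^2))
      = (∫ t in (0:ℝ)..(AA h), (t + BB h/2) * Real.sqrt (AA h - t))
        - (BB h^2/4) * RR h := by
  have hA0 : (0:ℝ) ≤ AA h := by linarith [AA_pos hh]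
  have h1 : (∫ t in (0:ℝ)..(AA h), Real.sqrt t * Real.sqrt (4*h + 2*t - t^2))
      = ∫ t in (0:ℝ)..(AA h), ((t + BB h/2) * Real.sqrt (AA h - t)
          - (BB h^2/4) * (Real.sqrt (AA h - t) / DD h t)) := by
    apply intervalIntegral.integral_congr
    intro t htt
    rw [uIcc_of_le hA0] at htt
    exact integrand_id hh htt
  rw [h1, intervalIntegral.integral_sub, intervalIntegral.integral_const_mul, RR]
  · apply Continuous.intervalIntegrable; fun_prop
  · exact (quot_intble hh).const_mul _

/-! ### Step 3 : the explicit part -/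

lemma int_sqrt_explicit {A c : ℝ} (hA : 0 < A) :
    (∫ s in (0:ℝ)..A, (c - s) * Real.sqrt s)
      = c * (2/3) * A * Real.sqrt A - (2/5) * A^2 * Real.sqrt A := by
  have hid : ∀ s ∈ uIcc (0:ℝ) A, (c - s) * Real.sqrt s
      = c * s^((1:ℝ)/2) - s^((3:ℝ)/2) := by
    intro s hs
    rw [uIcc_of_le hA.le] at hs
    have hs0 : 0 ≤ s := hs.1
    have h1 : Real.sqrt s = s^((1:ℝ)/2) := Real.sqrt_eq_rpow s
    have h2 : s^((3:ℝ)/2) = s * s^((1:ℝ)/2) := by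
      rcases eq_or_lt_of_le hs0 with h|h
      · rw [← h, Real.zero_rpow (by norm_num : (3:ℝ)/2 ≠ 0)]
        simp
      · rw [show (3:ℝ)/2 = 1 + 1/2 by norm_num, Real.rpow_add h, Real.rpow_one]
    rw [h1, h2]; ring
  rw [intervalIntegral.integral_congr hid]
  rw [intervalIntegral.integral_sub ((intervalIntegrable_rpow (by norm_num)).const_mul c)
      (intervalIntegrable_rpow (by norm_num)),
    intervalIntegral.integral_const_mul, integral_rpow (by norm_num), integral_rpow (by norm_num)]
  have h32 : A^((1:ℝ)/2 + 1) = A * Real.sqrt A := by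
    rw [show (1:ℝ)/2 + 1 = 1 + 1/2 by norm_num, Real.rpow_add hA, Real.rpow_one,
      Real.sqrt_eq_rpow]
  have h52 : A^((3:ℝ)/2 + 1) = A^2 * Real.sqrt A := by
    rw [show (3:ℝ)/2 + 1 = 2 + 1/2 by norm_num, Real.rpow_add hA, Real.sqrt_eq_rpow,
      Real.rpow_two]
  rw [h32, h52, Real.zero_rpow (by norm_num), Real.zero_rpow (by norm_num)]
  ring

lemma key3 {A B : ℝ} (hA : 0 < A) :
    (∫ t in (0:ℝ)..A, (t + B/2) * Real.sqrt (A - t))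
      = ((4/15) * A^2 + (B/3) * A) * Real.sqrt A := by
  have hc := intervalIntegral.integral_comp_sub_left
    (fun s => (A + B/2 - s) * Real.sqrt s) A (a := 0) (b := A)
  simp only [sub_self, sub_zero] at hc
  have hcongr : (∫ t in (0:ℝ)..A, (t + B/2) * Real.sqrt (A - t))
      = ∫ t in (0:ℝ)..A, (fun s => (A + B/2 - s) * Real.sqrt s) (A - t) := by
    apply intervalIntegral.integral_congr
    intro t _
    simp only
    ring_nf
  rw [hcongr, hc, int_sqrt_explicit hA]
  ring

/-! ### Step 4 : logarithmic integral and bounds for `RR` -/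

lemma int_log {A c : ℝ} (hc : 0 < c) (hA : 0 ≤ A) :
    (∫ t in (0:ℝ)..A, (2*t + c)⁻¹) = (Real.log (2*A + c) - Real.log c) / 2 := by
  have hderiv : ∀ t ∈ uIcc (0:ℝ) A, HasDerivAt (fun t => Real.log (2*t + c) / 2) (2*t+c)⁻¹ t := by
    intro t ht
    rw [uIcc_of_le hA] at ht
    have hpos : 0 < 2*t + c := by linarith [ht.1]
    have h1 : HasDerivAt (fun t : ℝ => 2*t + c) 2 t := by
      simpa using ((hasDerivAt_id t).const_mul 2).add_const c
    have h2 := (Real.hasDerivAt_log hpos.ne').comp t h1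
    have h3 := h2.div_const 2
    rw [show (2*t+c)⁻¹ = (2*t+c)⁻¹ * 2 / 2 by ring]
    exact h3
  have hint : IntervalIntegrable (fun t => (2*t + c)⁻¹) MeasureTheory.volume 0 A := by
    apply ContinuousOn.intervalIntegrable
    apply ContinuousOn.inv₀ (by fun_prop)
    intro t ht
    rw [uIcc_of_le hA] at ht
    have : 0 < 2*t + c := by linarith [ht.1]
    exact this.ne'
  have := intervalIntegral.integral_eq_sub_of_hasDerivAt hderiv hint
  rw [this]
  rw [mul_zero, zero_add]
  ring

lemma inv_intble {A c : ℝ} (hc : 0 < c) (hA : 0 ≤ A) :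
    IntervalIntegrable (fun t => (2*t + c)⁻¹) MeasureTheory.volume 0 A := by
  apply ContinuousOn.intervalIntegrable
  apply ContinuousOn.inv₀ (by fun_prop)
  intro t ht
  rw [uIcc_of_le hA] at ht
  have : 0 < 2*t + c := by linarith [ht.1]
  exact this.ne'

lemma R_upper {h : ℝ} (hh : 0 < h) :
    RR h ≤ Real.sqrt (AA h) * ((Real.log (2*AA h + BB h/2) - Real.log (BB h/2)) / 2) := by
  have hA0 : (0:ℝ) ≤ AA h := by linarith [AA_pos hh]
  have hB := BB_pos hh
  have hmono : ∀ t ∈ Icc (0:ℝ) (AA h),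
      Real.sqrt (AA h - t) / DD h t ≤ Real.sqrt (AA h) * (2*t + BB h/2)⁻¹ := by
    intro t ⟨ht0, htA⟩
    have hden : 2*t + BB h/2 ≤ DD h t := by
      have h1 : t ≤ Real.sqrt (t*(t + BB h)) := by
        rw [show t*(t+BB h) = t^2 + t*BB h by ring]
        calc t = Real.sqrt (t^2) := (Real.sqrt_sq ht0).symm
        _ ≤ _ := Real.sqrt_le_sqrt (by nlinarith)
      rw [DD]; linarith
    have hnum : Real.sqrt (AA h - t) ≤ Real.sqrt (AA h) := Real.sqrt_le_sqrt (by linarith)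
    have hpos : 0 < 2*t + BB h/2 := by linarith
    rw [← div_eq_mul_inv]
    exact div_le_div₀ (Real.sqrt_nonneg _) hnum hpos hden
  calc RR h ≤ ∫ t in (0:ℝ)..(AA h), Real.sqrt (AA h) * (2*t + BB h/2)⁻¹ := by
        rw [RR]
        apply intervalIntegral.integral_mono_on hA0 (quot_intble hh)
          ((inv_intble (by linarith) hA0).const_mul _) hmono
    _ = _ := by
        rw [intervalIntegral.integral_const_mul, int_log (by linarith) hA0]

lemma R_lower {h : ℝ} (hh : 0 < h) :
    Real.sqrt (AA h) * ((Real.log (2*AA h + BB h) - Real.log (BB h)) / 2)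
      - AA h * (2 * Real.sqrt (AA h))⁻¹ ≤ RR h := by
  have hApos : (0:ℝ) < AA h := by linarith [AA_pos hh]
  have hA0 : (0:ℝ) ≤ AA h := hApos.le
  have hB := BB_pos hh
  have hsA : 0 < Real.sqrt (AA h) := Real.sqrt_pos.mpr hApos
  have hAA : Real.sqrt (AA h) * Real.sqrt (AA h) = AA h := Real.mul_self_sqrt hA0
  have hmono : ∀ t ∈ Icc (0:ℝ) (AA h),
      Real.sqrt (AA h) * (2*t + BB h)⁻¹ - (2 * Real.sqrt (AA h))⁻¹
        ≤ Real.sqrt (AA h - t) / DD h t := by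
    intro t ⟨ht0, htA⟩
    have hpos : 0 < 2*t + BB h := by linarith
    have hden : DD h t ≤ 2*t + BB h := by
      have h1 : Real.sqrt (t*(t + BB h)) ≤ t + BB h/2 := by
        calc Real.sqrt (t*(t + BB h)) ≤ Real.sqrt ((t + BB h/2)^2) :=
              Real.sqrt_le_sqrt (by nlinarith)
        _ = t + BB h/2 := Real.sqrt_sq (by linarith)
      rw [DD]; linarith
    have hDpos := DD_pos hh ht0
    have hnn : 0 ≤ Real.sqrt (AA h) - t / Real.sqrt (AA h) := by
      rw [sub_nonneg, div_le_iff₀ hsA, hAA]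
      exact htA
    have hnum : Real.sqrt (AA h) - t / Real.sqrt (AA h) ≤ Real.sqrt (AA h - t) := by
      rw [Real.le_sqrt hnn (by linarith)]
      have e2 : (Real.sqrt (AA h) - t / Real.sqrt (AA h))^2
          = (AA h * AA h - 2*t*AA h + t^2)/AA h := by
        rw [← hAA]
        have hne : Real.sqrt (AA h) ≠ 0 := hsA.ne'
        field_simp
        rw [Real.sqrt_sq hsA.le]
        ring
      rw [e2, div_le_iff₀ hApos]
      nlinarith
    have step3 : Real.sqrt (AA h - t) / (2*t + BB h) ≤ Real.sqrt (AA h - t) / DD h t :=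
      div_le_div_of_nonneg_left (Real.sqrt_nonneg _) hDpos hden
    have step2 : (Real.sqrt (AA h) - t / Real.sqrt (AA h)) / (2*t + BB h)
        ≤ Real.sqrt (AA h - t) / (2*t + BB h) := by
      gcongr
    have step1 : Real.sqrt (AA h) * (2*t + BB h)⁻¹ - (2 * Real.sqrt (AA h))⁻¹
        ≤ (Real.sqrt (AA h) - t / Real.sqrt (AA h)) / (2*t + BB h) := by
      have hkey : (t / Real.sqrt (AA h)) / (2*t + BB h) ≤ (2 * Real.sqrt (AA h))⁻¹ := by
        rw [div_div, inv_eq_one_div, div_le_div_iff₀ (by positivity) (by positivity)]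
        nlinarith
      rw [sub_div, ← div_eq_mul_inv]
      linarith
    linarith
  calc Real.sqrt (AA h) * ((Real.log (2*AA h + BB h) - Real.log (BB h)) / 2)
        - AA h * (2 * Real.sqrt (AA h))⁻¹
      = ∫ t in (0:ℝ)..(AA h), (Real.sqrt (AA h) * (2*t + BB h)⁻¹ - (2 * Real.sqrt (AA h))⁻¹) := by
        rw [intervalIntegral.integral_sub ((inv_intble hB hA0).const_mul _)
          intervalIntegrable_const, intervalIntegral.integral_const_mul, int_log hB hA0,
          intervalIntegral.integral_const]
        simp [smul_eq_mul]
    _ ≤ RR h := by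
        rw [RR]
        exact intervalIntegral.integral_mono_on hA0
          (((inv_intble hB hA0).const_mul _).sub intervalIntegrable_const)
          (quot_intble hh) hmono

/-! ### Step 5 : the algebraic part -/

lemma poly_id' (w s : ℝ) :
    15*((((4:ℝ)/15)*w^4 + ((w^2-2)/3)*w^2) * w) - 15*s*(16/15 + (w^4 - 2*w^2))
      = (w-s)^3*(9*w^2+12*s*w+8) + (9*w^3 - 27*s*w^2 + 12*w*s^2 + 8*s)*(s^2 - 2) := by
  ring

lemma poly_id (w s : ℝ) (hs : 0 < s) (h2 : s^2 = 2) :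
    (((4:ℝ)/15)*w^4 + ((w^2-2)/3)*w^2) * w / s - 16/15 - (w^4 - 2*w^2)
      = (w-s)^3*(9*w^2+12*s*w+8)/(15*s) := by
  have hsne : s ≠ 0 := hs.ne'
  have e1 : (((4:ℝ)/15)*w^4 + ((w^2-2)/3)*w^2) * w / s - 16/15 - (w^4 - 2*w^2)
      = (15*((((4:ℝ)/15)*w^4 + ((w^2-2)/3)*w^2) * w) - 15*s*(16/15 + (w^4 - 2*w^2)))/(15*s) := by
    field_simp
    ring
  have e2 : 15*((((4:ℝ)/15)*w^4 + ((w^2-2)/3)*w^2) * w) - 15*s*(16/15 + (w^4 - 2*w^2))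
      = (w-s)^3*(9*w^2+12*s*w+8) := by
    linear_combination poly_id' w s + (9*w^3 - 27*s*w^2 + 12*w*s^2 + 8*s) * h2
  rw [e1, e2]

noncomputable def EE (h : ℝ) : ℝ :=
  (Real.sqrt 2)⁻¹ * (((4/15) * (AA h)^2 + (BB h/3) * (AA h)) * Real.sqrt (AA h)) - 16/15 - 4*h

noncomputable def CC (h : ℝ) : ℝ :=
  64*(9*(xmax h)^2 + 12*Real.sqrt 2*(xmax h) + 8)
    / (15*Real.sqrt 2*((uu h + 1)^3*(xmax h + Real.sqrt 2)^3))

lemma EE_eq {h : ℝ} (hh : 0 < h) : EE h = CC h * h^3 := by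
  have spos : (0:ℝ) < Real.sqrt 2 := by positivity
  have s2 : (Real.sqrt 2)^2 = 2 := Real.sq_sqrt (by norm_num)
  set s := Real.sqrt 2
  set w := xmax h with hwdef
  have hw2 : w^2 = AA h := xmax_sq hh
  have hu2 : uu h^2 = 1 + 4*h := uu_sq hh
  have hw2' : w^2 = 1 + uu h := by rw [hw2]; rfl
  have hsA : Real.sqrt (AA h) = w := (xmax_eq h).symm
  have hBval : BB h = w^2 - 2 := by rw [BB]; rw [hw2']; ring
  have h4 : 4*h = w^4 - 2*w^2 := by nlinarith [hu2, hw2']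
  have e0 : EE h = (((4:ℝ)/15)*w^4 + ((w^2-2)/3)*w^2) * w / s - 16/15 - (w^4 - 2*w^2) := by
    rw [EE, hsA, ← hw2, hBval, h4]
    ring
  rw [e0, poly_id w s spos s2]
  have hupos : 0 < uu h + 1 := by linarith [uu_nonneg h]
  have hwpos : 0 < w + s := by
    have := xmax_nonneg h
    rw [hwdef] at *
    positivity
  have hws : (w - s) * ((uu h + 1)*(w + s)) = 4*h := by
    linear_combination (uu h + 1)*hw2' - (uu h + 1)*s2 + hu2 + (2 + uu h - uu h)*0
  have hwms : w - s = 4*h/((uu h + 1)*(w + s)) := by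
    rw [eq_div_iff (by positivity)]
    exact hws
  rw [hwms, CC, ← hwdef, ← hsA, hsA]
  have hne1 : (uu h + 1)*(w+s) ≠ 0 := by positivity
  have hne2 : w + Real.sqrt 2 ≠ 0 := hwpos.ne'
  have hs0 : Real.sqrt 2 ≠ 0 := spos.ne'
  field_simp
  ring

/-! ### Step 6 : limits -/

lemma tendsto_uu : Tendsto uu (nhdsWithin 0 (Ioi 0)) (nhds 1) := by
  have hc : Continuous uu := by unfold uu; fun_prop
  have h0 : uu 0 = 1 := by norm_num [uu]
  rw [← h0]
  exact (hc.tendsto 0).mono_left nhdsWithin_le_nhds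

lemma tendsto_xmax : Tendsto xmax (nhdsWithin 0 (Ioi 0)) (nhds (Real.sqrt 2)) := by
  have hc : Continuous xmax := by unfold xmax; fun_prop
  have h0 : xmax 0 = Real.sqrt 2 := by norm_num [xmax]
  rw [← h0]
  exact (hc.tendsto 0).mono_left nhdsWithin_le_nhds

lemma tendsto_AA : Tendsto AA (nhdsWithin 0 (Ioi 0)) (nhds 2) := by
  have := tendsto_uu.const_add 1
  norm_num at this
  exact this

lemma tendsto_BB : Tendsto BB (nhdsWithin 0 (Ioi 0)) (nhds 0) := by
  have := tendsto_uu.sub_const 1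
  norm_num at this
  exact this

lemma tendsto_sqrtAA : Tendsto (fun h => Real.sqrt (AA h)) (nhdsWithin 0 (Ioi 0)) (nhds (Real.sqrt 2)) :=
  tendsto_xmax

lemma tendsto_negL : Tendsto (fun h : ℝ => -Real.log h) (nhdsWithin 0 (Ioi 0)) atTop :=
  tendsto_neg_atBot_atTop.comp Real.tendsto_log_nhdsGT_zero

lemma tendsto_invL : Tendsto (fun h : ℝ => (-Real.log h)⁻¹) (nhdsWithin 0 (Ioi 0)) (nhds 0) :=
  tendsto_inv_atTop_zero.comp tendsto_negL

lemma ev_pos : ∀ᶠ h in nhdsWithin (0:ℝ) (Ioi 0), 0 < h := self_mem_nhdsWithin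

lemma ev_lt_one : ∀ᶠ h in nhdsWithin (0:ℝ) (Ioi 0), h < 1 := by
  have h1 : Tendsto (fun h : ℝ => h) (nhdsWithin 0 (Ioi 0)) (nhds 0) :=
    tendsto_id.mono_right nhdsWithin_le_nhds
  exact h1.eventually (gt_mem_nhds one_pos)

lemma tendsto_Bh : Tendsto (fun h => BB h / h) (nhdsWithin 0 (Ioi 0)) (nhds 2) := by
  have heq : ∀ᶠ h in nhdsWithin (0:ℝ) (Ioi 0), 4/(uu h + 1) = BB h / h := by
    filter_upwards [ev_pos] with h hh
    have hu : 0 < uu h + 1 := by linarith [uu_nonneg h]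
    have hBdef : BB h = uu h - 1 := rfl
    rw [div_eq_div_iff hu.ne' hh.ne']
    linear_combination -uu_sq hh - (uu h + 1) * hBdef
  have hlim : Tendsto (fun h => 4/(uu h + 1)) (nhdsWithin 0 (Ioi 0)) (nhds 2) := by
    have := (tendsto_const_nhds (x := (4:ℝ))).div (tendsto_uu.add_const 1) (by norm_num)
    norm_num at this
    exact this
  exact hlim.congr' heq

lemma lograt (ψ : ℝ → ℝ) (c : ℝ) (hc : 0 < c)
    (hψ : Tendsto ψ (nhdsWithin 0 (Ioi 0)) (nhds c)) :
    Tendsto (fun h => (Real.log (ψ h) - Real.log (BB h)) * (-Real.log h)⁻¹)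
      (nhdsWithin 0 (Ioi 0)) (nhds 1) := by
  have heq : ∀ᶠ h in nhdsWithin (0:ℝ) (Ioi 0),
      (Real.log (ψ h) - Real.log (BB h / h)) * (-Real.log h)⁻¹ + 1
        = (Real.log (ψ h) - Real.log (BB h)) * (-Real.log h)⁻¹ := by
    filter_upwards [ev_pos, ev_lt_one] with h hh h1
    have hL : Real.log h < 0 := Real.log_neg hh h1
    have hLne : -Real.log h ≠ 0 := by linarith
    have hB := BB_pos hh
    have hlogB : Real.log (BB h) = Real.log (BB h / h) + Real.log h := by
      rw [← Real.log_mul (by positivity) hh.ne', div_mul_cancel₀ _ hh.ne']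
    rw [hlogB]
    have e1 : (Real.log (ψ h) - (Real.log (BB h / h) + Real.log h)) * (-Real.log h)⁻¹
        = (Real.log (ψ h) - Real.log (BB h / h)) * (-Real.log h)⁻¹
          + (-Real.log h) * (-Real.log h)⁻¹ := by ring
    rw [e1, mul_inv_cancel₀ hLne]
  have hψlog : Tendsto (fun h => Real.log (ψ h)) (nhdsWithin 0 (Ioi 0)) (nhds (Real.log c)) :=
    ((Real.continuousAt_log hc.ne').tendsto).comp hψ
  have hBlog : Tendsto (fun h => Real.log (BB h / h)) (nhdsWithin 0 (Ioi 0))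
      (nhds (Real.log 2)) :=
    ((Real.continuousAt_log two_ne_zero).tendsto).comp tendsto_Bh
  have := ((hψlog.sub hBlog).mul tendsto_invL).add_const 1
  rw [mul_zero, zero_add] at this
  exact this.congr' heq

lemma term1 : Tendsto (fun h => EE h / (h^2 * Real.log h)) (nhdsWithin 0 (Ioi 0)) (nhds 0) := by
  have heq : ∀ᶠ h in nhdsWithin (0:ℝ) (Ioi 0),
      CC h * (h * (Real.log h)⁻¹) = EE h / (h^2 * Real.log h) := by
    filter_upwards [ev_pos, ev_lt_one] with h hh h1
    have hL : Real.log h ≠ 0 := (Real.log_neg hh h1).ne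
    rw [EE_eq hh]
    field_simp
  have hCC : Tendsto CC (nhdsWithin 0 (Ioi 0)) (nhds (CC 0)) := by
    have hc : Continuous CC := by
      unfold CC
      apply Continuous.div
      · have : Continuous xmax := by unfold xmax; fun_prop
        fun_prop
      · have c1 : Continuous uu := by unfold uu; fun_prop
        have c2 : Continuous xmax := by unfold xmax; fun_prop
        fun_prop
      · intro h
        have h1 : 0 ≤ uu h := uu_nonneg h
        have h2 : 0 ≤ xmax h := xmax_nonneg h
        have h3 : (0:ℝ) < Real.sqrt 2 := by positivity
        positivity
    exact (hc.tendsto 0).mono_left nhdsWithin_le_nhds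
  have hsmall : Tendsto (fun h : ℝ => h * (Real.log h)⁻¹) (nhdsWithin 0 (Ioi 0)) (nhds 0) := by
    have h1 : Tendsto (fun h : ℝ => h) (nhdsWithin 0 (Ioi 0)) (nhds 0) :=
      tendsto_id.mono_right nhdsWithin_le_nhds
    have h2 : Tendsto (fun h : ℝ => (Real.log h)⁻¹) (nhdsWithin 0 (Ioi 0)) (nhds 0) := by
      have heq2 : (fun h : ℝ => (Real.log h)⁻¹) = fun h : ℝ => -((-Real.log h)⁻¹) := by
        funext h; rw [inv_neg, neg_neg]
      rw [heq2]
      have := tendsto_invL.neg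
      rwa [neg_zero] at this
    have := h1.mul h2
    rwa [mul_zero] at this
  have := hCC.mul hsmall
  rw [mul_zero] at this
  exact this.congr' heq

noncomputable def GG (h : ℝ) : ℝ := (BB h/h)^2 * (4*Real.sqrt 2)⁻¹ * (-Real.log h)⁻¹

lemma sqrt2_ne : Real.sqrt 2 ≠ 0 := by positivity

lemma tendsto_psi1 : Tendsto (fun h => 2*AA h + BB h/2) (nhdsWithin 0 (Ioi 0)) (nhds 4) := by
  have := (tendsto_AA.const_mul 2).add (tendsto_BB.div_const 2)
  norm_num at this
  exact this

lemma tendsto_psi2 : Tendsto (fun h => 2*AA h + BB h) (nhdsWithin 0 (Ioi 0)) (nhds 4) := by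
  have := (tendsto_AA.const_mul 2).add tendsto_BB
  norm_num at this
  exact this

lemma tendsto_Bh2 : Tendsto (fun h => (BB h/h)^2 * (4*Real.sqrt 2)⁻¹)
    (nhdsWithin 0 (Ioi 0)) (nhds (4 * (4*Real.sqrt 2)⁻¹)) := by
  have := (tendsto_Bh.pow 2).mul_const (4*Real.sqrt 2)⁻¹
  convert this using 2
  norm_num

lemma TU : Tendsto (fun h => GG h * (Real.sqrt (AA h)
      * ((Real.log (2*AA h + BB h/2) - Real.log (BB h/2)) / 2)))
    (nhdsWithin 0 (Ioi 0)) (nhds (1/2)) := by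
  have hX := lograt (fun h => 2*AA h + BB h/2) 4 (by norm_num) tendsto_psi1
  have hlog2 : Tendsto (fun h : ℝ => Real.log 2 * (-Real.log h)⁻¹)
      (nhdsWithin 0 (Ioi 0)) (nhds 0) := by
    have := tendsto_invL.const_mul (Real.log 2)
    rwa [mul_zero] at this
  have hinner : Tendsto (fun h => Real.sqrt (AA h)
      * (((Real.log (2*AA h + BB h/2) - Real.log (BB h)) * (-Real.log h)⁻¹
          + Real.log 2 * (-Real.log h)⁻¹) / 2))
      (nhdsWithin 0 (Ioi 0)) (nhds (Real.sqrt 2 * ((1 + 0)/2))) :=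
    tendsto_sqrtAA.mul ((hX.add hlog2).div_const 2)
  have htot := tendsto_Bh2.mul hinner
  have hval : 4 * (4*Real.sqrt 2)⁻¹ * (Real.sqrt 2 * ((1 + 0)/2)) = 1/2 := by
    have s2 : Real.sqrt 2 * Real.sqrt 2 = 2 := Real.mul_self_sqrt (by norm_num)
    field_simp
    norm_num
  rw [hval] at htot
  apply htot.congr'
  filter_upwards [ev_pos] with h hh
  have hB := BB_pos hh
  have hlogB2 : Real.log (BB h / 2) = Real.log (BB h) - Real.log 2 :=
    Real.log_div hB.ne' two_ne_zero
  rw [hlogB2, GG]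
  ring

lemma TL : Tendsto (fun h => GG h * (Real.sqrt (AA h)
      * ((Real.log (2*AA h + BB h) - Real.log (BB h)) / 2))
      - GG h * (AA h * (2 * Real.sqrt (AA h))⁻¹))
    (nhdsWithin 0 (Ioi 0)) (nhds (1/2)) := by
  have hY := lograt (fun h => 2*AA h + BB h) 4 (by norm_num) tendsto_psi2
  have hinner1 : Tendsto (fun h => Real.sqrt (AA h)
      * (((Real.log (2*AA h + BB h) - Real.log (BB h)) * (-Real.log h)⁻¹) / 2))
      (nhdsWithin 0 (Ioi 0)) (nhds (Real.sqrt 2 * (1/2))) :=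
    tendsto_sqrtAA.mul (hY.div_const 2)
  have hpart1 := tendsto_Bh2.mul hinner1
  have hinv2 : Tendsto (fun h => AA h * (2 * Real.sqrt (AA h))⁻¹)
      (nhdsWithin 0 (Ioi 0)) (nhds (2 * (2 * Real.sqrt 2)⁻¹)) := by
    apply tendsto_AA.mul
    apply Tendsto.inv₀ (tendsto_sqrtAA.const_mul 2)
    positivity
  have hpart2 := (tendsto_Bh2.mul tendsto_invL).mul hinv2
  have htot := hpart1.sub hpart2
  have hval : 4 * (4*Real.sqrt 2)⁻¹ * (Real.sqrt 2 * (1/2))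
      - 4 * (4*Real.sqrt 2)⁻¹ * 0 * (2 * (2 * Real.sqrt 2)⁻¹) = 1/2 := by
    have s2 : Real.sqrt 2 * Real.sqrt 2 = 2 := Real.mul_self_sqrt (by norm_num)
    field_simp
    ring
  rw [hval] at htot
  apply htot.congr'
  filter_upwards [] with h
  rw [GG]
  ring

lemma term2 : Tendsto (fun h => (-(BB h^2/4) * (Real.sqrt 2)⁻¹ * RR h) / (h^2 * Real.log h))
    (nhdsWithin 0 (Ioi 0)) (nhds (1/2)) := by
  have hGRlim : Tendsto (fun h => GG h * RR h) (nhdsWithin 0 (Ioi 0)) (nhds (1/2)) := by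
    apply tendsto_of_tendsto_of_tendsto_of_le_of_le' TL TU
    · filter_upwards [ev_pos, ev_lt_one] with h hh h1
      have hL : Real.log h < 0 := Real.log_neg hh h1
      have hGG : 0 ≤ GG h := by
        rw [GG]
        have : 0 < (-Real.log h)⁻¹ := by rw [inv_pos]; linarith
        positivity
      have := mul_le_mul_of_nonneg_left (R_lower hh) hGG
      calc GG h * (Real.sqrt (AA h) * ((Real.log (2*AA h + BB h) - Real.log (BB h)) / 2))
            - GG h * (AA h * (2 * Real.sqrt (AA h))⁻¹)
          = GG h * (Real.sqrt (AA h) * ((Real.log (2*AA h + BB h) - Real.log (BB h)) / 2)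
              - AA h * (2 * Real.sqrt (AA h))⁻¹) := by ring
        _ ≤ GG h * RR h := this
    · filter_upwards [ev_pos, ev_lt_one] with h hh h1
      have hL : Real.log h < 0 := Real.log_neg hh h1
      have hGG : 0 ≤ GG h := by
        rw [GG]
        have : 0 < (-Real.log h)⁻¹ := by rw [inv_pos]; linarith
        positivity
      exact mul_le_mul_of_nonneg_left (R_upper hh) hGG
  apply hGRlim.congr'
  filter_upwards [ev_pos, ev_lt_one] with h hh h1
  have hL : Real.log h < 0 := Real.log_neg hh h1
  have hLne : Real.log h ≠ 0 := hL.ne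
  rw [GG]
  field_simp
  try exact Or.inl trivial

/-- Leading logarithmic term of `I₂` at the figure-eight. -/
theorem ellI2_log_asymptotics :
    Tendsto (fun h => (ellI 2 h - 16/15 - 4*h) / (h^2 * Real.log h))
      (nhdsWithin 0 (Ioi 0)) (nhds (1/2)) := by
  have hdecomp : ∀ᶠ h in nhdsWithin (0:ℝ) (Ioi 0),
      EE h / (h^2 * Real.log h)
        + (-(BB h^2/4) * (Real.sqrt 2)⁻¹ * RR h) / (h^2 * Real.log h)
        = (ellI 2 h - 16/15 - 4*h) / (h^2 * Real.log h) := by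
    filter_upwards [ev_pos] with h hh
    have hmain : ellI 2 h - 16/15 - 4*h
        = EE h + (-(BB h^2/4) * (Real.sqrt 2)⁻¹ * RR h) := by
      rw [key1 hh, key2 hh, key3 (A := AA h) (B := BB h) (by linarith [AA_pos hh]), EE]
      ring
    rw [hmain, add_div]
  have := term1.add term2
  rw [zero_add] at this
  exact this.congr' hdecomp
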